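/- For every deterministic online algorithm P for the online traveling repairperson problem on the half-line (i.e., every function P assigning to each finite list σ of requests and each t ∈ ℕ a position P σ t ∈ [0,∞) satisfying the start, unit-speed and causality conditions), there exist a finite list σ of requests with locations in [0,10] and arrival times in ℕ, and a request (l, s) ∈ σ, whose completion time inf{u ≥ s : P̄ σ u = l} is strictly greater than 3·max{l, s}. Moreover, the multiset of request locations can be fixed in advance independently of P: there exist 11 locations, eight of them being 1, 4, 5, 6, 7, 8, 9, 10 and three of them lying in the open interval (0,1), such that for every algorithm P there is an assignment of arrival times in ℕ to these 11 locations producing such a violating request. In particular, no deterministic online algorithm is 3-competitive for the online traveling repairperson problem on a line, even in the prediction model with perfect predictions. -/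

import Mathlib

open scoped ENNReal

/-- Linear interpolation of an integer-time trajectory `g : ℕ → ℝ` to real
times: for `u ≥ 0`, `interp g u` moves linearly from `g ⌊u⌋` to `g (⌊u⌋+1)`. -/
noncomputable def interp (g : ℕ → ℝ) (u : ℝ) : ℝ :=
  g ⌊u⌋₊ + (u - (⌊u⌋₊ : ℝ)) * (g (⌊u⌋₊ + 1) - g ⌊u⌋₊)

/-- Causality of an online algorithm `P` (a request is a location–arrival-time
pair `(l, s) : ℝ × ℕ`): if two request lists contain exactly the same requests
with arrival time `≤ t`, as multisets, then the positions prescribed by `P`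
agree at all integer times `u ≤ t + 1`. -/
def Causal (P : List (ℝ × ℕ) → ℕ → ℝ) : Prop :=
  ∀ (σ σ' : List (ℝ × ℕ)) (t : ℕ),
    (↑(σ.filter fun r => decide (r.2 ≤ t)) : Multiset (ℝ × ℕ)) =
      (↑(σ'.filter fun r => decide (r.2 ≤ t)) : Multiset (ℝ × ℕ)) →
    ∀ u : ℕ, u ≤ t + 1 → P σ u = P σ' u

/-- The completion time (as an element of `[0, ∞]`, so `⊤` if never served) of
a request at location `l` with arrival time `s` under the interpolated
trajectory of `P` on request list `σ`: `inf {u ≥ s : P̄ σ u = l}`. -/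
noncomputable def completionTime (P : List (ℝ × ℕ) → ℕ → ℝ)
    (σ : List (ℝ × ℕ)) (l : ℝ) (s : ℕ) : ℝ≥0∞ :=
  sInf {c : ℝ≥0∞ | ∃ u : ℝ, (s : ℝ) ≤ u ∧ interp (P σ) u = l ∧
    c = ENNReal.ofReal u}

/-- no deterministic online algorithm for the online traveling
repairperson problem on the half-line is `3`-competitive.  There are `11`
locations fixed in advance — eight of them `1, 4, 5, 6, 7, 8, 9, 10` and
three of them in the open interval `(0,1)` — such that for every
deterministic algorithm `P` (a function from request lists and integer times
to positions in `[0,∞)`, starting at the origin, moving at unit speed, and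
causal) there is an assignment of arrival times in `ℕ` to these locations,
giving a request list `σ` with locations in `[0,10]`, containing a request
`(l, s)` whose completion time `inf {u ≥ s : P̄ σ u = l}` is strictly greater
than `3 * max l s`. -/
lemma g_steps {g : ℕ → ℝ} (hstep : ∀ t, |g (t+1) - g t| ≤ 1) :
    ∀ a b : ℕ, a ≤ b → |g b - g a| ≤ (b:ℝ) - a := by
  intro a b hab
  induction b, hab using Nat.le_induction with
  | base => simp
  | succ n hn ih =>
    have h1 := hstep n
    have h3 := abs_sub_le (g (n+1)) (g n) (g a)
    push_cast
    push_cast at ih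
    linarith

lemma interp_nat (g : ℕ → ℝ) (n : ℕ) : interp g (n:ℝ) = g n := by
  unfold interp
  rw [Nat.floor_natCast]
  ring

lemma interp_lip {g : ℕ → ℝ} (hstep : ∀ t, |g (t+1) - g t| ≤ 1) {u v : ℝ}
    (hu : 0 ≤ u) (huv : u ≤ v) : |interp g v - interp g u| ≤ v - u := by
  have hv : 0 ≤ v := hu.trans huv
  have hF1 : (⌊u⌋₊:ℝ) ≤ u := Nat.floor_le hu
  have hF2 : u < ⌊u⌋₊ + 1 := Nat.lt_floor_add_one u
  have hG1 : (⌊v⌋₊:ℝ) ≤ v := Nat.floor_le hv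
  have hG2 : v < ⌊v⌋₊ + 1 := Nat.lt_floor_add_one v
  rcases eq_or_lt_of_le (Nat.floor_mono huv : ⌊u⌋₊ ≤ ⌊v⌋₊) with heq | hlt
  · have e1 : interp g v - interp g u = (v - u) * (g (⌊u⌋₊ + 1) - g ⌊u⌋₊) := by
      unfold interp
      rw [← heq]
      ring
    rw [e1, abs_mul, abs_of_nonneg (by linarith : (0:ℝ) ≤ v - u)]
    nlinarith [hstep ⌊u⌋₊, abs_nonneg (g (⌊u⌋₊ + 1) - g ⌊u⌋₊)]
  · have hFG : ⌊u⌋₊ + 1 ≤ ⌊v⌋₊ := hlt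
    have e1 : interp g v - g ⌊v⌋₊ = (v - ⌊v⌋₊) * (g (⌊v⌋₊+1) - g ⌊v⌋₊) := by
      unfold interp; ring
    have e2 : g (⌊u⌋₊+1) - interp g u = (1 - (u - ⌊u⌋₊)) * (g (⌊u⌋₊+1) - g ⌊u⌋₊) := by
      unfold interp; ring
    have b1 : |interp g v - g ⌊v⌋₊| ≤ v - ⌊v⌋₊ := by
      rw [e1, abs_mul, abs_of_nonneg (by linarith : (0:ℝ) ≤ v - ⌊v⌋₊)]
      nlinarith [hstep ⌊v⌋₊, abs_nonneg (g (⌊v⌋₊ + 1) - g ⌊v⌋₊)]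
    have b2 : |g (⌊u⌋₊+1) - interp g u| ≤ (⌊u⌋₊:ℝ) + 1 - u := by
      rw [e2, abs_mul, abs_of_nonneg (by linarith : (0:ℝ) ≤ 1 - (u - ⌊u⌋₊))]
      nlinarith [hstep ⌊u⌋₊, abs_nonneg (g (⌊u⌋₊ + 1) - g ⌊u⌋₊)]
    have b3 : |g ⌊v⌋₊ - g (⌊u⌋₊+1)| ≤ (⌊v⌋₊:ℝ) - (⌊u⌋₊ + 1) := by
      have := g_steps hstep (⌊u⌋₊+1) ⌊v⌋₊ hFG
      push_cast at this ⊢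
      linarith
    have c1 := abs_sub_le (interp g v) (g ⌊v⌋₊) (interp g u)
    have c2 := abs_sub_le (g ⌊v⌋₊) (g (⌊u⌋₊+1)) (interp g u)
    push_cast at b1 b2 b3 ⊢
    linarith

lemma interp_contOn {g : ℕ → ℝ} (hstep : ∀ t, |g (t+1) - g t| ≤ 1) :
    ContinuousOn (interp g) (Set.Ici (0:ℝ)) := by
  have : LipschitzOnWith 1 (interp g) (Set.Ici (0:ℝ)) := by
    apply LipschitzOnWith.of_dist_le_mul
    intro a ha b hb
    rw [Real.dist_eq, Real.dist_eq, NNReal.coe_one, one_mul]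
    rcases le_total a b with hab | hab
    · rw [abs_sub_comm (interp g a), abs_sub_comm a]
      have := interp_lip hstep ha hab
      calc |interp g b - interp g a| ≤ b - a := this
        _ ≤ |b - a| := le_abs_self _
    · have := interp_lip hstep hb hab
      calc |interp g a - interp g b| ≤ a - b := this
        _ ≤ |a - b| := le_abs_self _
  exact this.continuousOn

lemma interp_congr {g g' : ℕ → ℝ} {N : ℕ} (h : ∀ n, n ≤ N → g n = g' n)
    {u : ℝ} (hu0 : 0 ≤ u) (hu : u ≤ (N:ℝ)) : interp g u = interp g' u := by
  have hfl : ⌊u⌋₊ ≤ N := by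
    have := Nat.floor_mono hu
    simpa using this
  rcases eq_or_lt_of_le hfl with heq | hlt
  · have huN : (N:ℝ) ≤ u := by
      rw [← heq]
      exact Nat.floor_le hu0
    have huN' : u = (N:ℝ) := le_antisymm hu huN
    have hz : u - (⌊u⌋₊:ℝ) = 0 := by rw [heq, huN']; simp
    unfold interp
    rw [hz, zero_mul, zero_mul, add_zero, add_zero, h _ hfl]
  · unfold interp
    rw [h _ hfl, h _ hlt]

lemma no_visit_low {g : ℕ → ℝ} (hstep : ∀ t, |g (t+1) - g t| ≤ 1)
    (h0 : g 0 = 0) {c T : ℝ} (hc : 0 < c)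
    (hno : ∀ u, 0 ≤ u → u ≤ T → interp g u ≠ c) :
    ∀ u, 0 ≤ u → u ≤ T → interp g u < c := by
  intro u hu huT
  rcases lt_or_ge (interp g u) c with h | h
  · exact h
  · exfalso
    have hcont : ContinuousOn (interp g) (Set.Icc 0 u) :=
      (interp_contOn hstep).mono (by intro z hz; exact hz.1)
    have h00 : interp g 0 = 0 := by
      have := interp_nat g 0
      rw [Nat.cast_zero] at this
      rw [this, h0]
    have hmem : c ∈ Set.Icc (interp g 0) (interp g u) := by
      rw [h00]; exact ⟨hc.le, h⟩
    obtain ⟨v, hv, hvc⟩ := intermediate_value_Icc hu hcont hmem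
    exact hno v hv.1 (hv.2.trans huT) hvc

lemma visit_of_le {P : List (ℝ × ℕ) → ℕ → ℝ} {σ : List (ℝ × ℕ)} {l : ℝ} {s : ℕ}
    {B : ℝ} (hstep : ∀ t, |P σ (t+1) - P σ t| ≤ 1) (hB : 0 ≤ B)
    (h : completionTime P σ l s ≤ ENNReal.ofReal B) :
    ∃ u, (s:ℝ) ≤ u ∧ u ≤ B ∧ interp (P σ) u = l := by
  by_cases hV : ∃ u, (s:ℝ) ≤ u ∧ interp (P σ) u = l
  · set V : Set ℝ := {u : ℝ | (s:ℝ) ≤ u ∧ interp (P σ) u = l} with hVdef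
    have hVne : V.Nonempty := hV
    have hVc : IsClosed V := by
      have hsub : Set.Ici ((s:ℝ)) ⊆ Set.Ici (0:ℝ) :=
        Set.Ici_subset_Ici.mpr (Nat.cast_nonneg s)
      have hcont : ContinuousOn (interp (P σ)) (Set.Ici ((s:ℝ))) :=
        (interp_contOn hstep).mono hsub
      have : V = Set.Ici ((s:ℝ)) ∩ (interp (P σ)) ⁻¹' {l} := by
        ext u
        simp [hVdef, Set.mem_Ici]
      rw [this]
      exact hcont.preimage_isClosed_of_isClosed isClosed_Ici isClosed_singleton
    have hbdd : BddBelow V := ⟨(s:ℝ), fun u hu => hu.1⟩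
    have hmem : sInf V ∈ V := hVc.csInf_mem hVne hbdd
    have hu0B : sInf V ≤ B := by
      by_contra hgt
      push_neg at hgt
      have hlb : ENNReal.ofReal (sInf V) ≤ completionTime P σ l s := by
        apply le_sInf
        rintro c ⟨u, hsu, hul, rfl⟩
        exact ENNReal.ofReal_le_ofReal (csInf_le hbdd ⟨hsu, hul⟩)
      have h2 : ENNReal.ofReal (sInf V) ≤ ENNReal.ofReal B := hlb.trans h
      rw [ENNReal.ofReal_le_ofReal_iff hB] at h2
      linarith
    exact ⟨sInf V, hmem.1, hu0B, hmem.2⟩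
  · exfalso
    push_neg at hV
    have hset : {c : ℝ≥0∞ | ∃ u : ℝ, (s : ℝ) ≤ u ∧ interp (P σ) u = l ∧
        c = ENNReal.ofReal u} = ∅ := by
      apply Set.eq_empty_iff_forall_notMem.mpr
      rintro c ⟨u, h1, h2, rfl⟩
      exact hV u h1 h2
    unfold completionTime at h
    rw [hset, sInf_empty] at h
    exact ENNReal.ofReal_ne_top (top_le_iff.mp h)

lemma kill5 (x : ℝ → ℝ) (t : ℝ)
    (hlip : ∀ u v : ℝ, 0 ≤ u → u ≤ v → |x v - x u| ≤ v - u)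
    (ht0 : 0 ≤ t)
    (hlow : ∀ u, 0 ≤ u → u ≤ t → x u < 5)
    (hK1 : 10 + 1/50 < t + x t)
    (hK2 : x t < t - (2 + 1/50))
    (hK3 : 2*t + x t < 20 - 1/100)
    (he : ∃ u, t ≤ u ∧ u ≤ 3*t ∧ x u = 1/100)
    (h5 : ∃ u, 0 ≤ u ∧ u ≤ 3*5 ∧ x u = 5)
    (h6 : ∃ u, 0 ≤ u ∧ u ≤ 3*6 ∧ x u = 6)
    (h7 : ∃ u, 0 ≤ u ∧ u ≤ 3*7 ∧ x u = 7)
    (h8 : ∃ u, 0 ≤ u ∧ u ≤ 3*8 ∧ x u = 8)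
    (h9 : ∃ u, 0 ≤ u ∧ u ≤ 3*9 ∧ x u = 9)
    (h10 : ∃ u, 0 ≤ u ∧ u ≤ 3*10 ∧ x u = 10) : False := by
  obtain ⟨ue, he1, he2, he3⟩ := he
  obtain ⟨u5, h51, h52, h53⟩ := h5
  obtain ⟨u6, h61, h62, h63⟩ := h6
  obtain ⟨u7, h71, h72, h73⟩ := h7
  obtain ⟨u8, h81, h82, h83⟩ := h8
  obtain ⟨u9, h91, h92, h93⟩ := h9
  obtain ⟨u10, h101, h102, h103⟩ := h10
  have ht5 : t < u5 := by
    by_contra hcon; push_neg at hcon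
    have := hlow u5 h51 hcon; rw [h53] at this; linarith
  have ht6 : t < u6 := by
    by_contra hcon; push_neg at hcon
    have := hlow u6 h61 hcon; rw [h63] at this; linarith
  have ht7 : t < u7 := by
    by_contra hcon; push_neg at hcon
    have := hlow u7 h71 hcon; rw [h73] at this; linarith
  have ht8 : t < u8 := by
    by_contra hcon; push_neg at hcon
    have := hlow u8 h81 hcon; rw [h83] at this; linarith
  have ht9 : t < u9 := by
    by_contra hcon; push_neg at hcon
    have := hlow u9 h91 hcon; rw [h93] at this; linarith
  have ht10 : t < u10 := by
    by_contra hcon; push_neg at hcon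
    have := hlow u10 h101 hcon; rw [h103] at this; linarith
  have lb5 : 5 - x t ≤ u5 - t := by
    have h := abs_le.mp (hlip t u5 ht0 ht5.le); rw [h53] at h; linarith [h.2]
  have lb6 : 6 - x t ≤ u6 - t := by
    have h := abs_le.mp (hlip t u6 ht0 ht6.le); rw [h63] at h; linarith [h.2]
  have lb7 : 7 - x t ≤ u7 - t := by
    have h := abs_le.mp (hlip t u7 ht0 ht7.le); rw [h73] at h; linarith [h.2]
  have lb8 : 8 - x t ≤ u8 - t := by
    have h := abs_le.mp (hlip t u8 ht0 ht8.le); rw [h83] at h; linarith [h.2]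
  have lb9 : 9 - x t ≤ u9 - t := by
    have h := abs_le.mp (hlip t u9 ht0 ht9.le); rw [h93] at h; linarith [h.2]
  have lb10 : 10 - x t ≤ u10 - t := by
    have h := abs_le.mp (hlip t u10 ht0 ht10.le); rw [h103] at h; linarith [h.2]
  have hue0 : 0 ≤ ue := ht0.trans he1
  have lbe : x t - 1/100 ≤ ue - t := by
    have h := abs_le.mp (hlip t ue ht0 he1); rw [he3] at h; linarith [h.1]
  rcases le_or_gt ue u10 with c10 | c10
  · have d10 : 10 - 1/100 ≤ u10 - ue := by
      have h := abs_le.mp (hlip ue u10 hue0 c10); rw [h103, he3] at h; linarith [h.1]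
    rcases le_or_gt ue u9 with c9 | c9
    · have d9 : 9 - 1/100 ≤ u9 - ue := by
        have h := abs_le.mp (hlip ue u9 hue0 c9); rw [h93, he3] at h; linarith [h.1]
      rcases le_or_gt ue u8 with c8 | c8
      · have d8 : 8 - 1/100 ≤ u8 - ue := by
          have h := abs_le.mp (hlip ue u8 hue0 c8); rw [h83, he3] at h; linarith [h.1]
        rcases le_or_gt ue u7 with c7 | c7
        · have d7 : 7 - 1/100 ≤ u7 - ue := by
            have h := abs_le.mp (hlip ue u7 hue0 c7); rw [h73, he3] at h; linarith [h.1]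
          rcases le_or_gt ue u6 with c6 | c6
          · have d6 : 6 - 1/100 ≤ u6 - ue := by
              have h := abs_le.mp (hlip ue u6 hue0 c6); rw [h63, he3] at h; linarith [h.1]
            rcases le_or_gt ue u5 with c5 | c5
            · have d5 : 5 - 1/100 ≤ u5 - ue := by
                have h := abs_le.mp (hlip ue u5 hue0 c5); rw [h53, he3] at h; linarith [h.1]
              linarith
            · have p5 : 5 - 1/100 ≤ ue - u5 := by
                have h := abs_le.mp (hlip u5 ue h51 c5.le); rw [he3, h53] at h; linarith [h.2]
              linarith
          · have p6 : 6 - 1/100 ≤ ue - u6 := by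
              have h := abs_le.mp (hlip u6 ue h61 c6.le); rw [he3, h63] at h; linarith [h.2]
            linarith
        · have p7 : 7 - 1/100 ≤ ue - u7 := by
            have h := abs_le.mp (hlip u7 ue h71 c7.le); rw [he3, h73] at h; linarith [h.2]
          linarith
      · have p8 : 8 - 1/100 ≤ ue - u8 := by
          have h := abs_le.mp (hlip u8 ue h81 c8.le); rw [he3, h83] at h; linarith [h.2]
        linarith
    · have p9 : 9 - 1/100 ≤ ue - u9 := by
        have h := abs_le.mp (hlip u9 ue h91 c9.le); rw [he3, h93] at h; linarith [h.2]
      linarith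
  · have p10 : 10 - 1/100 ≤ ue - u10 := by
      have h := abs_le.mp (hlip u10 ue h101 c10.le); rw [he3, h103] at h; linarith [h.2]
    linarith

lemma kill4 (x : ℝ → ℝ) (t : ℝ)
    (hlip : ∀ u v : ℝ, 0 ≤ u → u ≤ v → |x v - x u| ≤ v - u)
    (ht0 : 0 ≤ t)
    (hlow : ∀ u, 0 ≤ u → u ≤ t → x u < 4)
    (hK1 : 8 + 1/50 < t + x t)
    (hK2 : x t < t - (2 + 1/50))
    (hK3 : 2*t + x t < 20 - 1/100)
    (he : ∃ u, t ≤ u ∧ u ≤ 3*t ∧ x u = 1/100)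
    (h4 : ∃ u, 0 ≤ u ∧ u ≤ 3*4 ∧ x u = 4)
    (h5 : ∃ u, 0 ≤ u ∧ u ≤ 3*5 ∧ x u = 5)
    (h6 : ∃ u, 0 ≤ u ∧ u ≤ 3*6 ∧ x u = 6)
    (h7 : ∃ u, 0 ≤ u ∧ u ≤ 3*7 ∧ x u = 7)
    (h8 : ∃ u, 0 ≤ u ∧ u ≤ 3*8 ∧ x u = 8)
    (h9 : ∃ u, 0 ≤ u ∧ u ≤ 3*9 ∧ x u = 9)
    (h10 : ∃ u, 0 ≤ u ∧ u ≤ 3*10 ∧ x u = 10) : False := by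
  obtain ⟨ue, he1, he2, he3⟩ := he
  obtain ⟨u4, h41, h42, h43⟩ := h4
  obtain ⟨u5, h51, h52, h53⟩ := h5
  obtain ⟨u6, h61, h62, h63⟩ := h6
  obtain ⟨u7, h71, h72, h73⟩ := h7
  obtain ⟨u8, h81, h82, h83⟩ := h8
  obtain ⟨u9, h91, h92, h93⟩ := h9
  obtain ⟨u10, h101, h102, h103⟩ := h10
  have ht4 : t < u4 := by
    by_contra hcon; push_neg at hcon
    have := hlow u4 h41 hcon; rw [h43] at this; linarith
  have ht5 : t < u5 := by
    by_contra hcon; push_neg at hcon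
    have := hlow u5 h51 hcon; rw [h53] at this; linarith
  have ht6 : t < u6 := by
    by_contra hcon; push_neg at hcon
    have := hlow u6 h61 hcon; rw [h63] at this; linarith
  have ht7 : t < u7 := by
    by_contra hcon; push_neg at hcon
    have := hlow u7 h71 hcon; rw [h73] at this; linarith
  have ht8 : t < u8 := by
    by_contra hcon; push_neg at hcon
    have := hlow u8 h81 hcon; rw [h83] at this; linarith
  have ht9 : t < u9 := by
    by_contra hcon; push_neg at hcon
    have := hlow u9 h91 hcon; rw [h93] at this; linarith
  have ht10 : t < u10 := by
    by_contra hcon; push_neg at hcon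
    have := hlow u10 h101 hcon; rw [h103] at this; linarith
  have lb4 : 4 - x t ≤ u4 - t := by
    have h := abs_le.mp (hlip t u4 ht0 ht4.le); rw [h43] at h; linarith [h.2]
  have lb5 : 5 - x t ≤ u5 - t := by
    have h := abs_le.mp (hlip t u5 ht0 ht5.le); rw [h53] at h; linarith [h.2]
  have lb6 : 6 - x t ≤ u6 - t := by
    have h := abs_le.mp (hlip t u6 ht0 ht6.le); rw [h63] at h; linarith [h.2]
  have lb7 : 7 - x t ≤ u7 - t := by
    have h := abs_le.mp (hlip t u7 ht0 ht7.le); rw [h73] at h; linarith [h.2]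
  have lb8 : 8 - x t ≤ u8 - t := by
    have h := abs_le.mp (hlip t u8 ht0 ht8.le); rw [h83] at h; linarith [h.2]
  have lb9 : 9 - x t ≤ u9 - t := by
    have h := abs_le.mp (hlip t u9 ht0 ht9.le); rw [h93] at h; linarith [h.2]
  have lb10 : 10 - x t ≤ u10 - t := by
    have h := abs_le.mp (hlip t u10 ht0 ht10.le); rw [h103] at h; linarith [h.2]
  have hue0 : 0 ≤ ue := ht0.trans he1
  have lbe : x t - 1/100 ≤ ue - t := by
    have h := abs_le.mp (hlip t ue ht0 he1); rw [he3] at h; linarith [h.1]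
  rcases le_or_gt ue u10 with c10 | c10
  · have d10 : 10 - 1/100 ≤ u10 - ue := by
      have h := abs_le.mp (hlip ue u10 hue0 c10); rw [h103, he3] at h; linarith [h.1]
    rcases le_or_gt ue u9 with c9 | c9
    · have d9 : 9 - 1/100 ≤ u9 - ue := by
        have h := abs_le.mp (hlip ue u9 hue0 c9); rw [h93, he3] at h; linarith [h.1]
      rcases le_or_gt ue u8 with c8 | c8
      · have d8 : 8 - 1/100 ≤ u8 - ue := by
          have h := abs_le.mp (hlip ue u8 hue0 c8); rw [h83, he3] at h; linarith [h.1]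
        rcases le_or_gt ue u7 with c7 | c7
        · have d7 : 7 - 1/100 ≤ u7 - ue := by
            have h := abs_le.mp (hlip ue u7 hue0 c7); rw [h73, he3] at h; linarith [h.1]
          rcases le_or_gt ue u6 with c6 | c6
          · have d6 : 6 - 1/100 ≤ u6 - ue := by
              have h := abs_le.mp (hlip ue u6 hue0 c6); rw [h63, he3] at h; linarith [h.1]
            rcases le_or_gt ue u5 with c5 | c5
            · have d5 : 5 - 1/100 ≤ u5 - ue := by
                have h := abs_le.mp (hlip ue u5 hue0 c5); rw [h53, he3] at h; linarith [h.1]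
              rcases le_or_gt ue u4 with c4 | c4
              · have d4 : 4 - 1/100 ≤ u4 - ue := by
                  have h := abs_le.mp (hlip ue u4 hue0 c4); rw [h43, he3] at h; linarith [h.1]
                linarith
              · have p4 : 4 - 1/100 ≤ ue - u4 := by
                  have h := abs_le.mp (hlip u4 ue h41 c4.le); rw [he3, h43] at h; linarith [h.1]
                linarith
            · have p5 : 5 - 1/100 ≤ ue - u5 := by
                have h := abs_le.mp (hlip u5 ue h51 c5.le); rw [he3, h53] at h; linarith [h.1]
              linarith
          · have p6 : 6 - 1/100 ≤ ue - u6 := by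
              have h := abs_le.mp (hlip u6 ue h61 c6.le); rw [he3, h63] at h; linarith [h.1]
            linarith
        · have p7 : 7 - 1/100 ≤ ue - u7 := by
            have h := abs_le.mp (hlip u7 ue h71 c7.le); rw [he3, h73] at h; linarith [h.1]
          linarith
      · have p8 : 8 - 1/100 ≤ ue - u8 := by
          have h := abs_le.mp (hlip u8 ue h81 c8.le); rw [he3, h83] at h; linarith [h.1]
        linarith
    · have p9 : 9 - 1/100 ≤ ue - u9 := by
        have h := abs_le.mp (hlip u9 ue h91 c9.le); rw [he3, h93] at h; linarith [h.1]
      linarith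
  · have p10 : 10 - 1/100 ≤ ue - u10 := by
      have h := abs_le.mp (hlip u10 ue h101 c10.le); rw [he3, h103] at h; linarith [h.1]
    linarith

lemma causal_ext {P : List (ℝ × ℕ) → ℕ → ℝ} (hcaus : Causal P)
    (σ0 rest : List (ℝ × ℕ)) (t : ℕ) (hrest : ∀ r ∈ rest, ¬ r.2 ≤ t) :
    ∀ u : ℕ, u ≤ t + 1 → P (σ0 ++ rest) u = P σ0 u := by
  intro u hu
  apply hcaus _ _ t _ u hu
  have hfil : (σ0 ++ rest).filter (fun r => decide (r.2 ≤ t)) =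
      σ0.filter (fun r => decide (r.2 ≤ t)) := by
    have h1 : rest.filter (fun r => decide (r.2 ≤ t)) = [] := by
      apply List.filter_eq_nil_iff.mpr
      intro r hr
      simpa using hrest r hr
    rw [List.filter_append, h1, List.append_nil]
  rw [hfil]

lemma ladder_visit {P : List (ℝ × ℕ) → ℕ → ℝ} {σ : List (ℝ × ℕ)}
    (hstep : ∀ n, |P σ (n+1) - P σ n| ≤ 1) {l : ℝ} (hl : 0 ≤ l)
    (hmem : (l, (0:ℕ)) ∈ σ)
    (hAll : ∀ r ∈ σ, completionTime P σ r.1 r.2 ≤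
      ENNReal.ofReal (3 * max r.1 (r.2:ℝ))) :
    ∃ u, 0 ≤ u ∧ u ≤ 3 * l ∧ interp (P σ) u = l := by
  have h := hAll _ hmem
  simp only [Nat.cast_zero] at h
  rw [max_eq_left hl] at h
  have hres := visit_of_le hstep (by linarith) h
  simpa using hres

lemma eps_visit {P : List (ℝ × ℕ) → ℕ → ℝ} {σ : List (ℝ × ℕ)}
    (hstep : ∀ n, |P σ (n+1) - P σ n| ≤ 1) {s : ℕ} (hs : 1 ≤ s)
    (hmem : ((1/100 : ℝ), s) ∈ σ)
    (hAll : ∀ r ∈ σ, completionTime P σ r.1 r.2 ≤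
      ENNReal.ofReal (3 * max r.1 (r.2:ℝ))) :
    ∃ u, (s:ℝ) ≤ u ∧ u ≤ 3 * (s:ℝ) ∧ interp (P σ) u = 1/100 := by
  have h := hAll _ hmem
  have hs' : (1:ℝ) ≤ (s:ℝ) := by exact_mod_cast hs
  rw [max_eq_right (by linarith : (1/100:ℝ) ≤ (s:ℝ))] at h
  exact visit_of_le hstep (by linarith) h

lemma concA_core (P : List (ℝ × ℕ) → ℕ → ℝ)
    (h0 : ∀ σ, P σ 0 = 0) (hpos : ∀ σ t, 0 ≤ P σ t)
    (hstep : ∀ σ t, |P σ (t + 1) - P σ t| ≤ 1) (hcaus : Causal P)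
    (σ0 pad : List (ℝ × ℕ))
    (hpad : ∀ r ∈ pad, ¬ r.2 ≤ 9)
    (hl4 : ((4:ℝ), (0:ℕ)) ∈ σ0) (hl5 : ((5:ℝ), (0:ℕ)) ∈ σ0)
    (hl6 : ((6:ℝ), (0:ℕ)) ∈ σ0) (hl7 : ((7:ℝ), (0:ℕ)) ∈ σ0)
    (hl8 : ((8:ℝ), (0:ℕ)) ∈ σ0) (hl9 : ((9:ℝ), (0:ℕ)) ∈ σ0)
    (hl10 : ((10:ℝ), (0:ℕ)) ∈ σ0)
    (hno4 : ∀ j : ℕ, 7 ≤ j → j ≤ 9 →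
      (∀ r ∈ σ0 ++ ((1/100:ℝ), j) :: pad,
        completionTime P (σ0 ++ ((1/100:ℝ), j) :: pad) r.1 r.2 ≤
          ENNReal.ofReal (3 * max r.1 (r.2:ℝ))) →
      ∀ u : ℝ, 0 ≤ u → u ≤ 7 → interp (P (σ0 ++ ((1/100:ℝ), j) :: pad)) u ≠ 4) :
    ∃ j : ℕ, 7 ≤ j ∧ j ≤ 9 ∧
      ∃ r ∈ σ0 ++ ((1/100:ℝ), j) :: pad,
        ENNReal.ofReal (3 * max r.1 (r.2:ℝ)) <
          completionTime P (σ0 ++ ((1/100:ℝ), j) :: pad) r.1 r.2 := by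
  by_cases hc7 : 1 + 1/50 < P σ0 7
  · -- release the kill request at time 7
    refine ⟨7, le_refl _, by norm_num, ?_⟩
    by_contra hAll
    push_neg at hAll
    set σF : List (ℝ × ℕ) := σ0 ++ ((1/100:ℝ), 7) :: pad with hσF
    have tr : ∀ n : ℕ, n ≤ 7 → P σF n = P σ0 n := by
      intro n hn
      refine causal_ext hcaus σ0 _ 6 ?_ n (by omega)
      intro r hr
      rcases List.mem_cons.mp hr with rfl | hr
      · norm_num
      · have := hpad r hr; omega
    have hlipX : ∀ u v : ℝ, 0 ≤ u → u ≤ v → |interp (P σF) v - interp (P σF) u| ≤ v - u :=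
      fun u v hu huv => interp_lip (hstep σF) hu huv
    have hX7 : interp (P σF) (7:ℝ) = P σ0 7 := by
      rw [show (7:ℝ) = ((7:ℕ):ℝ) by norm_num, interp_nat]
      exact tr 7 (by norm_num)
    have hno4' := hno4 7 (le_refl _) (by norm_num) hAll
    have hlow4 := no_visit_low (hstep σF) (h0 σF) (by norm_num : (0:ℝ) < 4) hno4'
    have hX7lt : interp (P σF) (7:ℝ) < 4 := hlow4 7 (by norm_num) (by norm_num)
    obtain ⟨ue, hea, heb, hec⟩ := eps_visit (hstep σF) (by norm_num : 1 ≤ 7)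
      (List.mem_append_right _ List.mem_cons_self) hAll
    have hea' : (7:ℝ) ≤ ue := by exact_mod_cast hea
    have heb' : ue ≤ 3 * (7:ℝ) := by push_cast at heb; linarith
    exact kill4 (interp (P σF)) 7 hlipX (by norm_num) hlow4
      (by rw [hX7]; linarith) (by rw [hX7]; linarith [hX7lt]) (by linarith [hX7lt])
      ⟨ue, hea', heb', hec⟩
      (ladder_visit (hstep σF) (by norm_num) (List.mem_append_left _ hl4) hAll)
      (ladder_visit (hstep σF) (by norm_num) (List.mem_append_left _ hl5) hAll)
      (ladder_visit (hstep σF) (by norm_num) (List.mem_append_left _ hl6) hAll)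
      (ladder_visit (hstep σF) (by norm_num) (List.mem_append_left _ hl7) hAll)
      (ladder_visit (hstep σF) (by norm_num) (List.mem_append_left _ hl8) hAll)
      (ladder_visit (hstep σF) (by norm_num) (List.mem_append_left _ hl9) hAll)
      (ladder_visit (hstep σF) (by norm_num) (List.mem_append_left _ hl10) hAll)
  · push_neg at hc7
    by_cases hc8 : 1/50 < P σ0 8
    · refine ⟨8, by norm_num, by norm_num, ?_⟩
      by_contra hAll
      push_neg at hAll
      set σF : List (ℝ × ℕ) := σ0 ++ ((1/100:ℝ), 8) :: pad with hσF
      have tr : ∀ n : ℕ, n ≤ 8 → P σF n = P σ0 n := by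
        intro n hn
        refine causal_ext hcaus σ0 _ 7 ?_ n (by omega)
        intro r hr
        rcases List.mem_cons.mp hr with rfl | hr
        · norm_num
        · have := hpad r hr; omega
      have hlipX : ∀ u v : ℝ, 0 ≤ u → u ≤ v → |interp (P σF) v - interp (P σF) u| ≤ v - u :=
        fun u v hu huv => interp_lip (hstep σF) hu huv
      have hX7 : interp (P σF) (7:ℝ) = P σ0 7 := by
        rw [show (7:ℝ) = ((7:ℕ):ℝ) by norm_num, interp_nat]
        exact tr 7 (by norm_num)
      have hX8 : interp (P σF) (8:ℝ) = P σ0 8 := by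
        rw [show (8:ℝ) = ((8:ℕ):ℝ) by norm_num, interp_nat]
        exact tr 8 (by norm_num)
      have hno4' := hno4 8 (by norm_num) (by norm_num) hAll
      have hlow4 := no_visit_low (hstep σF) (h0 σF) (by norm_num : (0:ℝ) < 4) hno4'
      have hlow8 : ∀ u, 0 ≤ u → u ≤ 8 → interp (P σF) u < 4 := by
        intro u hu hu8
        rcases le_or_gt u 7 with h | h
        · exact hlow4 u hu h
        · have hl := abs_le.mp (hlipX 7 u (by norm_num) h.le)
          have : interp (P σF) u - interp (P σF) 7 ≤ u - 7 := hl.2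
          rw [hX7] at this
          linarith
      have hX8ub : interp (P σF) (8:ℝ) ≤ P σ0 7 + 1 := by
        have hl := abs_le.mp (hlipX 7 8 (by norm_num) (by norm_num))
        rw [hX7] at hl
        linarith [hl.2]
      obtain ⟨ue, hea, heb, hec⟩ := eps_visit (hstep σF) (by norm_num : 1 ≤ 8)
        (List.mem_append_right _ List.mem_cons_self) hAll
      have hea' : (8:ℝ) ≤ ue := by exact_mod_cast hea
      have heb' : ue ≤ 3 * (8:ℝ) := by push_cast at heb; linarith
      exact kill4 (interp (P σF)) 8 hlipX (by norm_num) hlow8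
        (by rw [hX8]; linarith) (by rw [hX8] at hX8ub ⊢; linarith)
        (by rw [hX8] at hX8ub ⊢; linarith)
        ⟨ue, hea', heb', hec⟩
        (ladder_visit (hstep σF) (by norm_num) (List.mem_append_left _ hl4) hAll)
        (ladder_visit (hstep σF) (by norm_num) (List.mem_append_left _ hl5) hAll)
        (ladder_visit (hstep σF) (by norm_num) (List.mem_append_left _ hl6) hAll)
        (ladder_visit (hstep σF) (by norm_num) (List.mem_append_left _ hl7) hAll)
        (ladder_visit (hstep σF) (by norm_num) (List.mem_append_left _ hl8) hAll)
        (ladder_visit (hstep σF) (by norm_num) (List.mem_append_left _ hl9) hAll)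
        (ladder_visit (hstep σF) (by norm_num) (List.mem_append_left _ hl10) hAll)
    · push_neg at hc8
      refine ⟨9, by norm_num, le_refl _, ?_⟩
      by_contra hAll
      push_neg at hAll
      set σF : List (ℝ × ℕ) := σ0 ++ ((1/100:ℝ), 9) :: pad with hσF
      have tr : ∀ n : ℕ, n ≤ 9 → P σF n = P σ0 n := by
        intro n hn
        refine causal_ext hcaus σ0 _ 8 ?_ n (by omega)
        intro r hr
        rcases List.mem_cons.mp hr with rfl | hr
        · norm_num
        · have := hpad r hr; omega
      have hlipX : ∀ u v : ℝ, 0 ≤ u → u ≤ v → |interp (P σF) v - interp (P σF) u| ≤ v - u :=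
        fun u v hu huv => interp_lip (hstep σF) hu huv
      have hX7 : interp (P σF) (7:ℝ) = P σ0 7 := by
        rw [show (7:ℝ) = ((7:ℕ):ℝ) by norm_num, interp_nat]
        exact tr 7 (by norm_num)
      have hX8 : interp (P σF) (8:ℝ) = P σ0 8 := by
        rw [show (8:ℝ) = ((8:ℕ):ℝ) by norm_num, interp_nat]
        exact tr 8 (by norm_num)
      have hX9 : interp (P σF) (9:ℝ) = P σF 9 := by
        rw [show (9:ℝ) = ((9:ℕ):ℝ) by norm_num, interp_nat]
      have hX9pos : (0:ℝ) ≤ interp (P σF) (9:ℝ) := by rw [hX9]; exact hpos σF 9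
      have hX9ub : interp (P σF) (9:ℝ) ≤ P σ0 8 + 1 := by
        have hl := abs_le.mp (hlipX 8 9 (by norm_num) (by norm_num))
        rw [hX8] at hl
        linarith [hl.2]
      have hno4' := hno4 9 (by norm_num) (le_refl _) hAll
      have hlow4 := no_visit_low (hstep σF) (h0 σF) (by norm_num : (0:ℝ) < 4) hno4'
      have hlow9 : ∀ u, 0 ≤ u → u ≤ 9 → interp (P σF) u < 4 := by
        intro u hu hu9
        rcases le_or_gt u 7 with h | h
        · exact hlow4 u hu h
        · have hl := abs_le.mp (hlipX 7 u (by norm_num) h.le)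
          have : interp (P σF) u - interp (P σF) 7 ≤ u - 7 := hl.2
          rw [hX7] at this
          linarith
      obtain ⟨ue, hea, heb, hec⟩ := eps_visit (hstep σF) (by norm_num : 1 ≤ 9)
        (List.mem_append_right _ List.mem_cons_self) hAll
      have hea' : (9:ℝ) ≤ ue := by exact_mod_cast hea
      have heb' : ue ≤ 3 * (9:ℝ) := by push_cast at heb; linarith
      exact kill4 (interp (P σF)) 9 hlipX (by norm_num) hlow9
        (by linarith) (by linarith) (by linarith)
        ⟨ue, hea', heb', hec⟩
        (ladder_visit (hstep σF) (by norm_num) (List.mem_append_left _ hl4) hAll)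
        (ladder_visit (hstep σF) (by norm_num) (List.mem_append_left _ hl5) hAll)
        (ladder_visit (hstep σF) (by norm_num) (List.mem_append_left _ hl6) hAll)
        (ladder_visit (hstep σF) (by norm_num) (List.mem_append_left _ hl7) hAll)
        (ladder_visit (hstep σF) (by norm_num) (List.mem_append_left _ hl8) hAll)
        (ladder_visit (hstep σF) (by norm_num) (List.mem_append_left _ hl9) hAll)
        (ladder_visit (hstep σF) (by norm_num) (List.mem_append_left _ hl10) hAll)

lemma interp_zero {g : ℕ → ℝ} (h0 : g 0 = 0) : interp g 0 = 0 := by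
  have := interp_nat g 0
  rw [Nat.cast_zero] at this
  rw [this, h0]

lemma interp_le_self {g : ℕ → ℝ} (hstep : ∀ t, |g (t+1) - g t| ≤ 1)
    (h0 : g 0 = 0) {u : ℝ} (hu : 0 ≤ u) : interp g u ≤ u := by
  have h := abs_le.mp (interp_lip hstep (le_refl (0:ℝ)) hu)
  rw [interp_zero h0] at h
  linarith [h.2]

def baseReq : List (ℝ × ℕ) := [(1,0),(4,0),(5,0),(6,0),(7,0),(8,0),(9,0),(10,0)]


theorem stmt_0 :
    ∃ locs : List ℝ,
      locs.length = 11 ∧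
      (∃ eps : List ℝ, eps.length = 3 ∧ (∀ e ∈ eps, 0 < e ∧ e < 1) ∧
        (↑locs : Multiset ℝ) =
          (↑(([1, 4, 5, 6, 7, 8, 9, 10] : List ℝ) ++ eps) : Multiset ℝ)) ∧
      ∀ P : List (ℝ × ℕ) → ℕ → ℝ,
        (∀ σ, P σ 0 = 0) →
        (∀ σ t, 0 ≤ P σ t) →
        (∀ σ t, |P σ (t + 1) - P σ t| ≤ 1) →
        Causal P →
        ∃ σ : List (ℝ × ℕ),
          (↑(σ.map Prod.fst) : Multiset ℝ) = (↑locs : Multiset ℝ) ∧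
          (∀ r ∈ σ, 0 ≤ r.1 ∧ r.1 ≤ 10) ∧
          ∃ r ∈ σ,
            ENNReal.ofReal (3 * max r.1 (r.2 : ℝ)) <
              completionTime P σ r.1 r.2 := by
  refine ⟨[1,4,5,6,7,8,9,10,1/100,1/100,1/100], by norm_num,
    ⟨[1/100,1/100,1/100], by norm_num, ?_, by rfl⟩, ?_⟩
  · intro e he
    simp at he
    rcases he with rfl|rfl|rfl <;> norm_num
  intro P h0 hpos hstep hcaus
  by_cases hc : 1 - 1/100 ≤ P baseReq 2
  · -- HIGH branch : release an epsilon request at time 2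
    by_cases hQ : ∃ w : ℝ, 0 ≤ w ∧ w ≤ 7 ∧
        interp (P (baseReq ++ [((1/100:ℝ),(2:ℕ))])) w = 4
    · -- the server serves 4 by time 7 : kill request 5 at time 7
      refine ⟨(baseReq ++ [((1/100:ℝ),(2:ℕ))]) ++ ((1/100:ℝ),(7:ℕ)) :: [((1/100:ℝ),(40:ℕ))],
        by simp [baseReq], ?_, ?_⟩
      · intro r hr
        simp [baseReq] at hr
        rcases hr with rfl|rfl|rfl|rfl|rfl|rfl|rfl|rfl|rfl|rfl|rfl <;> norm_num
      by_contra hAll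
      push_neg at hAll
      set σF : List (ℝ × ℕ) :=
        (baseReq ++ [((1/100:ℝ),(2:ℕ))]) ++ ((1/100:ℝ),(7:ℕ)) :: [((1/100:ℝ),(40:ℕ))] with hσF
      have hstepF := hstep σF
      have hlipX : ∀ u v : ℝ, 0 ≤ u → u ≤ v →
          |interp (P σF) v - interp (P σF) u| ≤ v - u :=
        fun u v hu huv => interp_lip hstepF hu huv
      have hself : ∀ u : ℝ, 0 ≤ u → interp (P σF) u ≤ u :=
        fun u hu => interp_le_self hstepF (h0 σF) hu
      have tr7 : ∀ n : ℕ, n ≤ 7 → P σF n = P (baseReq ++ [((1/100:ℝ),(2:ℕ))]) n := by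
        intro n hn
        refine causal_ext hcaus _ _ 6 ?_ n (by omega)
        intro r hr
        simp at hr
        rcases hr with rfl|rfl <;> norm_num
      have trb : ∀ n : ℕ, n ≤ 2 → P σF n = P baseReq n := by
        intro n hn
        have hd : σF = baseReq ++
            ([((1/100:ℝ),(2:ℕ))] ++ (((1/100:ℝ),(7:ℕ)) :: [((1/100:ℝ),(40:ℕ))])) := by
          simp [hσF]
        rw [hd]
        refine causal_ext hcaus _ _ 1 ?_ n (by omega)
        intro r hr
        simp at hr
        rcases hr with rfl|rfl|rfl <;> norm_num
      have hX2 : interp (P σF) (2:ℝ) = P baseReq 2 := by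
        rw [show (2:ℝ) = ((2:ℕ):ℝ) by norm_num, interp_nat]
        exact trb 2 le_rfl
      have hcub : P baseReq 2 ≤ 2 := by
        have := hself 2 (by norm_num)
        rw [hX2] at this
        linarith
      obtain ⟨ue, hea, heb, hec⟩ := eps_visit hstepF (by norm_num : 1 ≤ 2)
        (by simp [hσF, baseReq]) hAll
      have hea' : (2:ℝ) ≤ ue := by exact_mod_cast hea
      have heb' : ue ≤ 6 := by push_cast at heb; linarith
      have hue0 : (0:ℝ) ≤ ue := by linarith
      have huelb : 2 + (P baseReq 2 - 1/100) ≤ ue := by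
        have h := abs_le.mp (hlipX 2 ue (by norm_num) hea')
        rw [hec, hX2] at h
        linarith [h.1]
      obtain ⟨w, hw0, hw7, hw4⟩ := hQ
      have hw4' : interp (P σF) w = 4 := by
        rw [interp_congr tr7 hw0 (by exact_mod_cast hw7 : w ≤ ((7:ℕ):ℝ))]
        exact hw4
      have hw4lb : (4:ℝ) ≤ w := by
        have := hself w hw0
        rw [hw4'] at this
        linarith
      have hwue : ue < w := by
        rcases le_or_gt w ue with hcase | hcase
        · exfalso
          have h1 := abs_le.mp (hlipX 2 w (by norm_num) (by linarith))
          rw [hw4', hX2] at h1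
          have h2 := abs_le.mp (hlipX w ue hw0 hcase)
          rw [hec, hw4'] at h2
          linarith [h1.1, h2.1]
        · exact hcase
      have hwlb : ue + (4 - 1/100) ≤ w := by
        have h := abs_le.mp (hlipX ue w hue0 hwue.le)
        rw [hw4', hec] at h
        linarith [h.2]
      have hX7lb : w - 3 ≤ interp (P σF) (7:ℝ) := by
        have h := abs_le.mp (hlipX w 7 hw0 hw7)
        rw [hw4'] at h
        linarith [h.1]
      have hX7ub : interp (P σF) (7:ℝ) ≤ 1/100 + (7 - ue) := by
        have h := abs_le.mp (hlipX ue 7 hue0 (by linarith))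
        rw [hec] at h
        linarith [h.2]
      have hno5 : ∀ v : ℝ, 0 ≤ v → v ≤ 7 → interp (P σF) v ≠ 5 := by
        intro v hv0 hv7 hv5
        have hv5lb : (5:ℝ) ≤ v := by
          have := hself v hv0
          rw [hv5] at this
          linarith
        rcases le_or_gt v ue with hcase | hcase
        · have h1 := abs_le.mp (hlipX 2 v (by norm_num) (by linarith))
          rw [hv5, hX2] at h1
          have h2 := abs_le.mp (hlipX v ue hv0 hcase)
          rw [hec, hv5] at h2
          linarith [h1.1, h2.1]
        · have h2 := abs_le.mp (hlipX ue v hue0 hcase.le)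
          rw [hv5, hec] at h2
          linarith [h2.1]
      have hlow5 := no_visit_low hstepF (h0 σF) (by norm_num : (0:ℝ) < 5) hno5
      obtain ⟨uk, hka, hkb, hkc⟩ := eps_visit hstepF (by norm_num : 1 ≤ 7)
        (by simp [hσF, baseReq]) hAll
      have hka' : (7:ℝ) ≤ uk := by exact_mod_cast hka
      have hkb' : uk ≤ 3 * (7:ℝ) := by push_cast at hkb; linarith
      exact kill5 (interp (P σF)) 7 hlipX (by norm_num) hlow5
        (by linarith) (by linarith) (by linarith)
        ⟨uk, hka', hkb', hkc⟩
        (ladder_visit hstepF (by norm_num) (by simp [hσF, baseReq]) hAll)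
        (ladder_visit hstepF (by norm_num) (by simp [hσF, baseReq]) hAll)
        (ladder_visit hstepF (by norm_num) (by simp [hσF, baseReq]) hAll)
        (ladder_visit hstepF (by norm_num) (by simp [hσF, baseReq]) hAll)
        (ladder_visit hstepF (by norm_num) (by simp [hσF, baseReq]) hAll)
        (ladder_visit hstepF (by norm_num) (by simp [hσF, baseReq]) hAll)
    · -- 4 not served by time 7 on this path : Conclusion A
      have hno4 : ∀ j : ℕ, 7 ≤ j → j ≤ 9 →
          (∀ r ∈ (baseReq ++ [((1/100:ℝ),(2:ℕ))]) ++ ((1/100:ℝ), j) :: [((1/100:ℝ),(40:ℕ))],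
            completionTime P ((baseReq ++ [((1/100:ℝ),(2:ℕ))]) ++ ((1/100:ℝ), j) :: [((1/100:ℝ),(40:ℕ))]) r.1 r.2 ≤
              ENNReal.ofReal (3 * max r.1 (r.2:ℝ))) →
          ∀ u : ℝ, 0 ≤ u → u ≤ 7 →
            interp (P ((baseReq ++ [((1/100:ℝ),(2:ℕ))]) ++ ((1/100:ℝ), j) :: [((1/100:ℝ),(40:ℕ))])) u ≠ 4 := by
        intro j hj7 hj9 hAll u hu0 hu7 h4u
        have tr : ∀ n : ℕ, n ≤ 7 →
            P ((baseReq ++ [((1/100:ℝ),(2:ℕ))]) ++ ((1/100:ℝ), j) :: [((1/100:ℝ),(40:ℕ))]) n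
              = P (baseReq ++ [((1/100:ℝ),(2:ℕ))]) n := by
          intro n hn
          refine causal_ext hcaus _ _ 6 ?_ n (by omega)
          intro r hr
          simp at hr
          rcases hr with rfl|rfl
          · simpa using by omega
          · norm_num
        apply hQ
        refine ⟨u, hu0, hu7, ?_⟩
        rw [← interp_congr tr hu0 (by exact_mod_cast hu7 : u ≤ ((7:ℕ):ℝ))]
        exact h4u
      obtain ⟨j, hj7, hj9, hr⟩ := concA_core P h0 hpos hstep hcaus
        (baseReq ++ [((1/100:ℝ),(2:ℕ))]) [((1/100:ℝ),(40:ℕ))]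
        (by intro r hr; simp at hr; subst hr; norm_num)
        (by simp [baseReq]) (by simp [baseReq]) (by simp [baseReq]) (by simp [baseReq])
        (by simp [baseReq]) (by simp [baseReq]) (by simp [baseReq])
        hno4
      exact ⟨(baseReq ++ [((1/100:ℝ),(2:ℕ))]) ++ ((1/100:ℝ), j) :: [((1/100:ℝ),(40:ℕ))],
        by simp [baseReq],
        by intro r hr; simp [baseReq] at hr;
           rcases hr with rfl|rfl|rfl|rfl|rfl|rfl|rfl|rfl|rfl|rfl|rfl <;> norm_num,
        hr⟩
  · -- LOW branch
    push_neg at hc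
    by_cases hb : P baseReq 3 ≤ 1/50
    · by_cases hQ : ∃ w : ℝ, 0 ≤ w ∧ w ≤ 7 ∧ interp (P baseReq) w = 4
      · -- kill request 5 at time 7
        refine ⟨baseReq ++ ((1/100:ℝ),(7:ℕ)) :: [((1/100:ℝ),(40:ℕ)), ((1/100:ℝ),(40:ℕ))],
          by simp [baseReq], ?_, ?_⟩
        · intro r hr
          simp [baseReq] at hr
          rcases hr with rfl|rfl|rfl|rfl|rfl|rfl|rfl|rfl|rfl|rfl <;> norm_num
        by_contra hAll
        push_neg at hAll
        set σF : List (ℝ × ℕ) :=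
          baseReq ++ ((1/100:ℝ),(7:ℕ)) :: [((1/100:ℝ),(40:ℕ)), ((1/100:ℝ),(40:ℕ))] with hσF
        have hstepF := hstep σF
        have hlipX : ∀ u v : ℝ, 0 ≤ u → u ≤ v →
            |interp (P σF) v - interp (P σF) u| ≤ v - u :=
          fun u v hu huv => interp_lip hstepF hu huv
        have hself : ∀ u : ℝ, 0 ≤ u → interp (P σF) u ≤ u :=
          fun u hu => interp_le_self hstepF (h0 σF) hu
        have tr7 : ∀ n : ℕ, n ≤ 7 → P σF n = P baseReq n := by
          intro n hn
          refine causal_ext hcaus _ _ 6 ?_ n (by omega)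
          intro r hr
          simp at hr
          rcases hr with rfl|rfl|rfl <;> norm_num
        have hX3 : interp (P σF) (3:ℝ) = P baseReq 3 := by
          rw [show (3:ℝ) = ((3:ℕ):ℝ) by norm_num, interp_nat]
          exact tr7 3 (by norm_num)
        obtain ⟨w, hw0, hw7, hw4⟩ := hQ
        have hw4' : interp (P σF) w = 4 := by
          rw [interp_congr tr7 hw0 (by exact_mod_cast hw7 : w ≤ ((7:ℕ):ℝ))]
          exact hw4
        have hw4lb : (4:ℝ) ≤ w := by
          have := hself w hw0
          rw [hw4'] at this
          linarith
        have hwlb : 3 + (4 - P baseReq 3) ≤ w := by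
          have h := abs_le.mp (hlipX 3 w (by norm_num) (by linarith))
          rw [hw4', hX3] at h
          linarith [h.2]
        have hX7lb : w - 3 ≤ interp (P σF) (7:ℝ) := by
          have h := abs_le.mp (hlipX w 7 hw0 hw7)
          rw [hw4'] at h
          linarith [h.1]
        have hX7ub : interp (P σF) (7:ℝ) ≤ P baseReq 3 + 4 := by
          have h := abs_le.mp (hlipX 3 7 (by norm_num) (by norm_num))
          rw [hX3] at h
          linarith [h.2]
        have hno5 : ∀ v : ℝ, 0 ≤ v → v ≤ 7 → interp (P σF) v ≠ 5 := by
          intro v hv0 hv7 hv5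
          have hv5lb : (5:ℝ) ≤ v := by
            have := hself v hv0
            rw [hv5] at this
            linarith
          have h1 := abs_le.mp (hlipX 3 v (by norm_num) (by linarith))
          rw [hv5, hX3] at h1
          linarith [h1.2]
        have hlow5 := no_visit_low hstepF (h0 σF) (by norm_num : (0:ℝ) < 5) hno5
        obtain ⟨uk, hka, hkb, hkc⟩ := eps_visit hstepF (by norm_num : 1 ≤ 7)
          (by simp [hσF, baseReq]) hAll
        have hka' : (7:ℝ) ≤ uk := by exact_mod_cast hka
        have hkb' : uk ≤ 3 * (7:ℝ) := by push_cast at hkb; linarith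
        exact kill5 (interp (P σF)) 7 hlipX (by norm_num) hlow5
          (by linarith) (by linarith) (by linarith)
          ⟨uk, hka', hkb', hkc⟩
          (ladder_visit hstepF (by norm_num) (by simp [hσF, baseReq]) hAll)
          (ladder_visit hstepF (by norm_num) (by simp [hσF, baseReq]) hAll)
          (ladder_visit hstepF (by norm_num) (by simp [hσF, baseReq]) hAll)
          (ladder_visit hstepF (by norm_num) (by simp [hσF, baseReq]) hAll)
          (ladder_visit hstepF (by norm_num) (by simp [hσF, baseReq]) hAll)
          (ladder_visit hstepF (by norm_num) (by simp [hσF, baseReq]) hAll)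
      · -- Conclusion A directly
        have hno4 : ∀ j : ℕ, 7 ≤ j → j ≤ 9 →
            (∀ r ∈ baseReq ++ ((1/100:ℝ), j) :: [((1/100:ℝ),(40:ℕ)), ((1/100:ℝ),(40:ℕ))],
              completionTime P (baseReq ++ ((1/100:ℝ), j) :: [((1/100:ℝ),(40:ℕ)), ((1/100:ℝ),(40:ℕ))]) r.1 r.2 ≤
                ENNReal.ofReal (3 * max r.1 (r.2:ℝ))) →
            ∀ u : ℝ, 0 ≤ u → u ≤ 7 →
              interp (P (baseReq ++ ((1/100:ℝ), j) :: [((1/100:ℝ),(40:ℕ)), ((1/100:ℝ),(40:ℕ))])) u ≠ 4 := by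
          intro j hj7 hj9 hAll u hu0 hu7 h4u
          have tr : ∀ n : ℕ, n ≤ 7 →
              P (baseReq ++ ((1/100:ℝ), j) :: [((1/100:ℝ),(40:ℕ)), ((1/100:ℝ),(40:ℕ))]) n
                = P baseReq n := by
            intro n hn
            refine causal_ext hcaus _ _ 6 ?_ n (by omega)
            intro r hr
            simp at hr
            rcases hr with rfl|rfl
            · simpa using by omega
            · norm_num
          apply hQ
          refine ⟨u, hu0, hu7, ?_⟩
          rw [← interp_congr tr hu0 (by exact_mod_cast hu7 : u ≤ ((7:ℕ):ℝ))]
          exact h4u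
        obtain ⟨j, hj7, hj9, hr⟩ := concA_core P h0 hpos hstep hcaus
          baseReq [((1/100:ℝ),(40:ℕ)), ((1/100:ℝ),(40:ℕ))]
          (by intro r hr; simp at hr; rcases hr with rfl|rfl <;> norm_num)
          (by simp [baseReq]) (by simp [baseReq]) (by simp [baseReq]) (by simp [baseReq])
          (by simp [baseReq]) (by simp [baseReq]) (by simp [baseReq])
          hno4
        exact ⟨baseReq ++ ((1/100:ℝ), j) :: [((1/100:ℝ),(40:ℕ)), ((1/100:ℝ),(40:ℕ))],
          by simp [baseReq],
          by intro r hr; simp [baseReq] at hr;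
             rcases hr with rfl|rfl|rfl|rfl|rfl|rfl|rfl|rfl|rfl|rfl <;> norm_num,
          hr⟩
    · -- knock at time 3, then Conclusion A
      push_neg at hb
      have hno4 : ∀ j : ℕ, 7 ≤ j → j ≤ 9 →
          (∀ r ∈ (baseReq ++ [((1/100:ℝ),(3:ℕ))]) ++ ((1/100:ℝ), j) :: [((1/100:ℝ),(40:ℕ))],
            completionTime P ((baseReq ++ [((1/100:ℝ),(3:ℕ))]) ++ ((1/100:ℝ), j) :: [((1/100:ℝ),(40:ℕ))]) r.1 r.2 ≤
              ENNReal.ofReal (3 * max r.1 (r.2:ℝ))) →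
          ∀ u : ℝ, 0 ≤ u → u ≤ 7 →
            interp (P ((baseReq ++ [((1/100:ℝ),(3:ℕ))]) ++ ((1/100:ℝ), j) :: [((1/100:ℝ),(40:ℕ))])) u ≠ 4 := by
        intro j hj7 hj9 hAll u hu0 hu7 h4u
        set σF : List (ℝ × ℕ) :=
          (baseReq ++ [((1/100:ℝ),(3:ℕ))]) ++ ((1/100:ℝ), j) :: [((1/100:ℝ),(40:ℕ))] with hσF
        have hstepF := hstep σF
        have hlipX : ∀ u v : ℝ, 0 ≤ u → u ≤ v →
            |interp (P σF) v - interp (P σF) u| ≤ v - u :=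
          fun u v hu huv => interp_lip hstepF hu huv
        have hself : ∀ u : ℝ, 0 ≤ u → interp (P σF) u ≤ u :=
          fun u hu => interp_le_self hstepF (h0 σF) hu
        have trb : ∀ n : ℕ, n ≤ 3 → P σF n = P baseReq n := by
          intro n hn
          have hd : σF = baseReq ++
              ([((1/100:ℝ),(3:ℕ))] ++ (((1/100:ℝ), j) :: [((1/100:ℝ),(40:ℕ))])) := by
            simp [hσF]
          rw [hd]
          refine causal_ext hcaus _ _ 2 ?_ n (by omega)
          intro r hr
          simp at hr
          rcases hr with rfl|rfl|rfl
          · norm_num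
          · simpa using by omega
          · norm_num
        have hX3 : interp (P σF) (3:ℝ) = P baseReq 3 := by
          rw [show (3:ℝ) = ((3:ℕ):ℝ) by norm_num, interp_nat]
          exact trb 3 le_rfl
        have hbub : P baseReq 3 ≤ P baseReq 2 + 1 := by
          have := abs_le.mp (hstep baseReq 2)
          linarith [this.2]
        obtain ⟨ue, hea, heb, hec⟩ := eps_visit hstepF (by norm_num : 1 ≤ 3)
          (by simp [hσF, baseReq]) hAll
        have hea' : (3:ℝ) ≤ ue := by exact_mod_cast hea
        have heb' : ue ≤ 9 := by push_cast at heb; linarith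
        have hue0 : (0:ℝ) ≤ ue := by linarith
        have huelb : 3 + (P baseReq 3 - 1/100) ≤ ue := by
          have h := abs_le.mp (hlipX 3 ue (by norm_num) hea')
          rw [hec, hX3] at h
          linarith [h.1]
        have hu4lb : (4:ℝ) ≤ u := by
          have := hself u hu0
          rw [h4u] at this
          linarith
        rcases le_or_gt u ue with hcase | hcase
        · have h1 := abs_le.mp (hlipX 3 u (by norm_num) (by linarith))
          rw [h4u, hX3] at h1
          have h2 := abs_le.mp (hlipX u ue hu0 hcase)
          rw [hec, h4u] at h2
          linarith [h1.1, h2.1]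
        · have h2 := abs_le.mp (hlipX ue u hue0 hcase.le)
          rw [h4u, hec] at h2
          linarith [h2.2]
      obtain ⟨j, hj7, hj9, hr⟩ := concA_core P h0 hpos hstep hcaus
        (baseReq ++ [((1/100:ℝ),(3:ℕ))]) [((1/100:ℝ),(40:ℕ))]
        (by intro r hr; simp at hr; subst hr; norm_num)
        (by simp [baseReq]) (by simp [baseReq]) (by simp [baseReq]) (by simp [baseReq])
        (by simp [baseReq]) (by simp [baseReq]) (by simp [baseReq])
        hno4
      exact ⟨(baseReq ++ [((1/100:ℝ),(3:ℕ))]) ++ ((1/100:ℝ), j) :: [((1/100:ℝ),(40:ℕ))],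
        by simp [baseReq],
        by intro r hr; simp [baseReq] at hr;
           rcases hr with rfl|rfl|rfl|rfl|rfl|rfl|rfl|rfl|rfl|rfl|rfl <;> norm_num,
        hr⟩
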